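/- Let R_B = ℤ[A_1, A_3, A_4, …, B_2, B_3, B_4, …]/I_ass and let F(u,v) = u + v + Σ_{i,j≥1} a_{i,j} u^i v^j be the Buchstaber formal group over R_B. Then F is a generating formal group over R_B, i.e. the subring of R_B generated by the coefficients a_{i,j} (i,j ≥ 1) is all of R_B. -/

import Mathlib

noncomputable section

/-- Index type for the variables `A₁, A₃, A₄, …` (left summand)
and `B₂, B₃, B₄, …` (right summand). -/
abbrev BVar : Type := {k : ℕ // k = 1 ∨ 3 ≤ k} ⊕ {k : ℕ // 2 ≤ k}

/-- The polynomial ring `ℤ[A₁, A₃, A₄, …, B₂, B₃, B₄, …]`. -/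
abbrev R0 : Type := MvPolynomial BVar ℤ

/-- The variable `A_k` (with the convention `A₀ = A₂ = 0`). -/
def Acoef (k : ℕ) : R0 := if h : k = 1 ∨ 3 ≤ k then MvPolynomial.X (Sum.inl ⟨k, h⟩) else 0

/-- The variable `B_k` (with the convention `B₀ = B₁ = 0`). -/
def Bcoef (k : ℕ) : R0 := if h : 2 ≤ k then MvPolynomial.X (Sum.inr ⟨k, h⟩) else 0

/-- The series `A(u) = 1 + Σ_{k ≥ 1} A_k u^k` (with `A₂ = 0`). -/
def Aser : PowerSeries R0 := PowerSeries.mk fun k => if k = 0 then 1 else Acoef k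

/-- The series `B(u) = 1 + Σ_{k ≥ 2} B_k u^k`. -/
def Bser : PowerSeries R0 := PowerSeries.mk fun k => if k = 0 then 1 else Bcoef k

/-- A one-variable power series `f`, viewed as a multivariable power series
in the single variable `i`:  `f(x_i)`. -/
def onVar {R : Type*} [CommRing R] {σ : Type*} [DecidableEq σ] (i : σ) (f : PowerSeries R) :
    MvPowerSeries σ R :=
  fun d => if d = Finsupp.single i (d i) then PowerSeries.coeff (d i) f else 0

/-- The denominator `u·B(v) − v·B(u)` of the Buchstaber formal group. -/
def buchDen {R : Type*} [CommRing R] (B : PowerSeries R) : MvPowerSeries (Fin 2) R :=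
  MvPowerSeries.X 0 * onVar 1 B - MvPowerSeries.X 1 * onVar 0 B

/-- The numerator `u²·A(v) − v²·A(u)` of the Buchstaber formal group. -/
def buchNum {R : Type*} [CommRing R] (A : PowerSeries R) : MvPowerSeries (Fin 2) R :=
  (MvPowerSeries.X 0) ^ 2 * onVar 1 A - (MvPowerSeries.X 1) ^ 2 * onVar 0 A

/-- The exponent vector of the monomial `u^i v^j`. -/
def ee (i j : ℕ) : Fin 2 →₀ ℕ := Finsupp.single 0 i + Finsupp.single 1 j

/-- Total degree of an exponent vector. -/
def degSum {σ : Type*} (d : σ →₀ ℕ) : ℕ := d.sum fun _ m => m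

/-- Substitution `F(x, y)` of two power series `x`, `y` in three variables, with zero
constant term, into a power series `F` in two variables: the coefficient of a monomial `d`
in `F(x,y)` is `Σ_{i,j} F_{i,j}·[d](x^i y^j)`, a finite sum since only `i + j ≤ |d|`
can contribute. -/
def subst2 {R : Type*} [CommRing R] (F : MvPowerSeries (Fin 2) R)
    (x y : MvPowerSeries (Fin 3) R) : MvPowerSeries (Fin 3) R :=
  fun d => ∑ p ∈ Finset.range (degSum d + 1) ×ˢ Finset.range (degSum d + 1),
    MvPowerSeries.coeff (ee p.1 p.2) F * MvPowerSeries.coeff d (x ^ p.1 * y ^ p.2)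

/-- The associativity defect `F(u, F(v,w)) − F(F(u,v), w)`. -/
def assocDefect {R : Type*} [CommRing R] (F : MvPowerSeries (Fin 2) R) :
    MvPowerSeries (Fin 3) R :=
  subst2 F (MvPowerSeries.X 0) (subst2 F (MvPowerSeries.X 1) (MvPowerSeries.X 2)) -
    subst2 F (subst2 F (MvPowerSeries.X 0) (MvPowerSeries.X 1)) (MvPowerSeries.X 2)

/-- The associativity ideal: the ideal generated by all coefficients of
`F(u, F(v,w)) − F(F(u,v), w)`. -/
def Iass {R : Type*} [CommRing R] (F : MvPowerSeries (Fin 2) R) : Ideal R :=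
  Ideal.span (Set.range fun d : Fin 3 →₀ ℕ => MvPowerSeries.coeff d (assocDefect F))

/-- The coefficient ring `R_B = ℤ[A₁, A₃, A₄, …, B₂, B₃, B₄, …]/I_ass` of the
Buchstaber formal group `F`. -/
abbrev RB (F : MvPowerSeries (Fin 2) R0) : Type := R0 ⧸ Iass F

/-- The coefficient `a_{i,j}` of the formal group `F`, in the quotient ring `RB F`. -/
def aB (F : MvPowerSeries (Fin 2) R0) (i j : ℕ) : RB F :=
  Ideal.Quotient.mk (Iass F) (MvPowerSeries.coeff (ee i j) F)

/-- The element `e_n = λ₁ a_{1,n} + λ₂ a_{2,n−1} + … + λ_n a_{n,1}` of `R_B`. -/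
def eElt (F : MvPowerSeries (Fin 2) R0) (lam : ℕ → ℕ → ℤ) (n : ℕ) : RB F :=
  ∑ i ∈ Finset.Icc 1 n, lam n i • aB F i (n + 1 - i)

/-- `d(n+1) = gcd(C(n+1,1), …, C(n+1,n))`. -/
def dBig (n : ℕ) : ℕ := (Finset.Icc 1 n).gcd fun i => (n + 1).choose i

section BuchAux

lemma ee_zero (i j : ℕ) : ee i j 0 = i := by
  simp [ee, Finsupp.single_apply]

lemma ee_one (i j : ℕ) : ee i j 1 = j := by
  simp [ee, Finsupp.single_apply]

lemma eq_ee (d : Fin 2 →₀ ℕ) : d = ee (d 0) (d 1) := by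
  ext a
  fin_cases a
  · simp [ee, Finsupp.single_apply]
  · simp [ee, Finsupp.single_apply]

lemma ee_add (i j k l : ℕ) : ee i j + ee k l = ee (i + k) (j + l) := by
  ext a
  fin_cases a
  · simp [ee, Finsupp.single_apply]
  · simp [ee, Finsupp.single_apply]

lemma ee_sub0 (i j : ℕ) : ee i j - Finsupp.single 0 1 = ee (i - 1) j := by
  ext a
  rw [Finsupp.tsub_apply]
  fin_cases a
  · simp [ee, Finsupp.single_apply]
  · simp [ee, Finsupp.single_apply]

lemma ee_sub1 (i j : ℕ) : ee i j - Finsupp.single 1 1 = ee i (j - 1) := by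
  ext a
  rw [Finsupp.tsub_apply]
  fin_cases a
  · simp [ee, Finsupp.single_apply]
  · simp [ee, Finsupp.single_apply]

open MvPowerSeries in
lemma coeff_X0_mul {R : Type*} [CommRing R] (φ : MvPowerSeries (Fin 2) R) (i j : ℕ) :
    MvPowerSeries.coeff (ee i j) (MvPowerSeries.X 0 * φ) =
      if 1 ≤ i then MvPowerSeries.coeff (ee (i - 1) j) φ else 0 := by
  rw [MvPowerSeries.X_def, MvPowerSeries.coeff_monomial_mul, ee_sub0]
  have h2 : Finsupp.single (0 : Fin 2) 1 ≤ ee i j ↔ 1 ≤ i := by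
    rw [Finsupp.single_le_iff, ee_zero]
  by_cases h : 1 ≤ i
  · rw [if_pos (h2.mpr h), if_pos h, one_mul]
  · rw [if_neg (fun hc => h (h2.mp hc)), if_neg h]

lemma coeff_X1_mul {R : Type*} [CommRing R] (φ : MvPowerSeries (Fin 2) R) (i j : ℕ) :
    MvPowerSeries.coeff (ee i j) (MvPowerSeries.X 1 * φ) =
      if 1 ≤ j then MvPowerSeries.coeff (ee i (j - 1)) φ else 0 := by
  rw [MvPowerSeries.X_def, MvPowerSeries.coeff_monomial_mul, ee_sub1]
  have h2 : Finsupp.single (1 : Fin 2) 1 ≤ ee i j ↔ 1 ≤ j := by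
    rw [Finsupp.single_le_iff, ee_one]
  by_cases h : 1 ≤ j
  · rw [if_pos (h2.mpr h), if_pos h, one_mul]
  · rw [if_neg (fun hc => h (h2.mp hc)), if_neg h]

lemma coeff_onVar1 {R : Type*} [CommRing R] (f : PowerSeries R) (i j : ℕ) :
    MvPowerSeries.coeff (ee i j) (onVar 1 f) =
      if i = 0 then PowerSeries.coeff j f else 0 := by
  rw [MvPowerSeries.coeff_apply]
  show (if ee i j = Finsupp.single 1 (ee i j 1) then PowerSeries.coeff (ee i j 1) f else 0) = _
  rw [ee_one]
  have hs : Finsupp.single (1 : Fin 2) j = ee 0 j := by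
    rw [ee, Finsupp.single_zero, zero_add]
  by_cases h : i = 0
  · rw [if_pos, if_pos h]
    rw [h, hs]
  · rw [if_neg, if_neg h]
    rw [hs]
    intro hc
    exact h (by rw [← ee_zero i j, hc, ee_zero])

lemma coeff_onVar0 {R : Type*} [CommRing R] (f : PowerSeries R) (i j : ℕ) :
    MvPowerSeries.coeff (ee i j) (onVar 0 f) =
      if j = 0 then PowerSeries.coeff i f else 0 := by
  rw [MvPowerSeries.coeff_apply]
  show (if ee i j = Finsupp.single 0 (ee i j 0) then PowerSeries.coeff (ee i j 0) f else 0) = _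
  rw [ee_zero]
  have hs : Finsupp.single (0 : Fin 2) i = ee i 0 := by
    rw [ee, Finsupp.single_zero, add_zero]
  by_cases h : j = 0
  · rw [if_pos, if_pos h]
    rw [h, hs]
  · rw [if_neg, if_neg h]
    rw [hs]
    intro hc
    exact h (by rw [← ee_one i j, hc, ee_one])

lemma coeff_mul_ee {R : Type*} [CommRing R] (f g : MvPowerSeries (Fin 2) R) (m n : ℕ) :
    MvPowerSeries.coeff (ee m n) (f * g) =
      ∑ i ∈ Finset.range (m+1), ∑ j ∈ Finset.range (n+1),
        MvPowerSeries.coeff (ee i j) f * MvPowerSeries.coeff (ee (m-i) (n-j)) g := by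
  rw [MvPowerSeries.coeff_mul, ← Finset.sum_product']
  refine Finset.sum_nbij' (fun p => (p.1 0, p.1 1))
    (fun q => (ee q.1 q.2, ee (m - q.1) (n - q.2))) ?_ ?_ ?_ ?_ ?_
  · intro p hp
    rw [Finset.HasAntidiagonal.mem_antidiagonal] at hp
    have h0 : p.1 0 + p.2 0 = m := by
      have := congrArg (fun d => d 0) hp
      simpa [ee_zero, Finsupp.add_apply] using this
    have h1 : p.1 1 + p.2 1 = n := by
      have := congrArg (fun d => d 1) hp
      simpa [ee_one, Finsupp.add_apply] using this
    simp only [Finset.mem_product, Finset.mem_range]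
    omega
  · intro q hq
    simp only [Finset.mem_product, Finset.mem_range] at hq
    rw [Finset.HasAntidiagonal.mem_antidiagonal, ee_add]
    congr 1 <;> omega
  · intro p hp
    rw [Finset.HasAntidiagonal.mem_antidiagonal] at hp
    have h0 : p.1 0 + p.2 0 = m := by
      have := congrArg (fun d => d 0) hp
      simpa [ee_zero, Finsupp.add_apply] using this
    have h1 : p.1 1 + p.2 1 = n := by
      have := congrArg (fun d => d 1) hp
      simpa [ee_one, Finsupp.add_apply] using this
    have e1 : ee (p.1 0) (p.1 1) = p.1 := (eq_ee p.1).symm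
    have e2 : ee (m - p.1 0) (n - p.1 1) = p.2 := by
      rw [eq_ee p.2]
      congr 1 <;> omega
    exact Prod.ext e1 e2
  · intro q hq
    simp only [ee_zero, ee_one]
  · intro p hp
    rw [Finset.HasAntidiagonal.mem_antidiagonal] at hp
    have h0 : p.1 0 + p.2 0 = m := by
      have := congrArg (fun d => d 0) hp
      simpa [ee_zero, Finsupp.add_apply] using this
    have h1 : p.1 1 + p.2 1 = n := by
      have := congrArg (fun d => d 1) hp
      simpa [ee_one, Finsupp.add_apply] using this
    have h2 : ee (p.2 0) (p.2 1) = ee (m - p.1 0) (n - p.1 1) := by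
      have ha : p.2 0 = m - p.1 0 := by omega
      have hb : p.2 1 = n - p.1 1 := by omega
      rw [ha, hb]
    conv_lhs => rw [eq_ee p.1, eq_ee p.2]
    rw [h2]

/-- `bb k` : the `k`-th coefficient of `Bser`. -/
def bb (k : ℕ) : R0 := if k = 0 then 1 else Bcoef k
/-- `aa k` : the `k`-th coefficient of `Aser`. -/
def aa (k : ℕ) : R0 := if k = 0 then 1 else Acoef k

lemma coeff_Bser (k : ℕ) : PowerSeries.coeff k Bser = bb k := by
  rw [Bser, PowerSeries.coeff_mk, bb]

lemma coeff_Aser (k : ℕ) : PowerSeries.coeff k Aser = aa k := by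
  rw [Aser, PowerSeries.coeff_mk, aa]

lemma bb_zero : bb 0 = 1 := rfl

lemma bb_one : bb 1 = 0 := by
  rw [bb, if_neg one_ne_zero, Bcoef, dif_neg (by omega)]

lemma cD (i j : ℕ) : MvPowerSeries.coeff (ee i j) (buchDen Bser) =
    (if i = 1 then bb j else 0) - (if j = 1 then bb i else 0) := by
  rw [buchDen, map_sub, coeff_X0_mul, coeff_X1_mul]
  congr 1
  · by_cases h : 1 ≤ i
    · rw [if_pos h, coeff_onVar1, coeff_Bser]
      by_cases h1 : i = 1
      · rw [if_pos (by omega), if_pos h1]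
      · rw [if_neg (by omega), if_neg h1]
    · rw [if_neg h, if_neg (by omega)]
  · by_cases h : 1 ≤ j
    · rw [if_pos h, coeff_onVar0, coeff_Bser]
      by_cases h1 : j = 1
      · rw [if_pos (by omega), if_pos h1]
      · rw [if_neg (by omega), if_neg h1]
    · rw [if_neg h, if_neg (by omega)]

lemma cN (i j : ℕ) : MvPowerSeries.coeff (ee i j) (buchNum Aser) =
    (if i = 2 then aa j else 0) - (if j = 2 then aa i else 0) := by
  rw [buchNum, map_sub, pow_two, pow_two, mul_assoc, mul_assoc, coeff_X0_mul, coeff_X1_mul]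
  congr 1
  · by_cases h : 1 ≤ i
    · rw [if_pos h, coeff_X0_mul]
      by_cases h2 : 1 ≤ i - 1
      · rw [if_pos h2, coeff_onVar1, coeff_Aser]
        by_cases h3 : i = 2
        · rw [if_pos (by omega), if_pos h3]
        · rw [if_neg (by omega), if_neg h3]
      · rw [if_neg h2, if_neg (by omega)]
    · rw [if_neg h, if_neg (by omega)]
  · by_cases h : 1 ≤ j
    · rw [if_pos h, coeff_X1_mul]
      by_cases h2 : 1 ≤ j - 1
      · rw [if_pos h2, coeff_onVar0, coeff_Aser]
        by_cases h3 : j = 2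
        · rw [if_pos (by omega), if_pos h3]
        · rw [if_neg (by omega), if_neg h3]
      · rw [if_neg h2, if_neg (by omega)]
    · rw [if_neg h, if_neg (by omega)]

end BuchAux

section BuchRows

variable (F : MvPowerSeries (Fin 2) R0)

lemma row0 (hF : F * buchDen Bser = buchNum Aser) (k : ℕ) :
    MvPowerSeries.coeff (ee 0 k) F = if k = 1 then 1 else 0 := by
  have h : MvPowerSeries.coeff (ee 0 (k+1)) (F * buchDen Bser) =
      -(MvPowerSeries.coeff (ee 0 k) F) := by
    rw [coeff_mul_ee, Finset.sum_range_one]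
    have hc : ∀ j ∈ Finset.range (k+1+1),
        MvPowerSeries.coeff (ee 0 j) F *
          MvPowerSeries.coeff (ee (0-0) (k+1-j)) (buchDen Bser)
        = if j = k then -(MvPowerSeries.coeff (ee 0 k) F) else 0 := by
      intro j hj
      rw [Finset.mem_range] at hj
      rw [cD]
      by_cases hjk : j = k
      · rw [if_pos hjk, if_neg (show ¬(0:ℕ)-0 = 1 by omega), if_pos (show k+1-j = 1 by omega),
          hjk, show bb (0-0) = 1 from bb_zero]
        ring
      · rw [if_neg hjk, if_neg (show ¬(0:ℕ)-0 = 1 by omega),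
          if_neg (show ¬(k+1-j = 1) by omega)]
        ring
    rw [Finset.sum_congr rfl hc, Finset.sum_ite_eq' (Finset.range (k+1+1)) k,
      if_pos (Finset.mem_range.mpr (by omega))]
  have h2 := congrArg (MvPowerSeries.coeff (ee 0 (k+1))) hF
  rw [h, cN, if_neg (show ¬(0:ℕ) = 2 by omega)] at h2
  by_cases hk : k = 1
  · rw [if_pos (show k+1 = 2 by omega), show aa 0 = 1 from rfl] at h2
    rw [if_pos hk]
    linear_combination -h2
  · rw [if_neg (show ¬(k+1 = 2) by omega)] at h2
    rw [if_neg hk]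
    linear_combination -h2

lemma row1 (hF : F * buchDen Bser = buchNum Aser) (n : ℕ) (hn : 1 ≤ n) :
    bb (n-1) - MvPowerSeries.coeff (ee 1 (n-1)) F
      = -(if n = 2 then Acoef 1 else 0) := by
  have h := congrArg (MvPowerSeries.coeff (ee 1 n)) hF
  rw [coeff_mul_ee, Finset.sum_range_succ, Finset.sum_range_one] at h
  have e0 : ∑ j ∈ Finset.range (n+1),
      MvPowerSeries.coeff (ee 0 j) F *
        MvPowerSeries.coeff (ee (1-0) (n-j)) (buchDen Bser) = bb (n-1) := by
    have hc : ∀ j ∈ Finset.range (n+1),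
        MvPowerSeries.coeff (ee 0 j) F *
          MvPowerSeries.coeff (ee (1-0) (n-j)) (buchDen Bser)
        = if j = 1 then bb (n-1) else 0 := by
      intro j hj
      rw [Finset.mem_range] at hj
      rw [row0 F hF j, cD, if_pos (show (1:ℕ)-0 = 1 by omega),
        show bb (1-0) = 0 from bb_one, ite_self, sub_zero]
      by_cases hj1 : j = 1
      · rw [if_pos hj1, if_pos hj1, one_mul, hj1]
      · rw [if_neg hj1, if_neg hj1, zero_mul]
    rw [Finset.sum_congr rfl hc, Finset.sum_ite_eq' (Finset.range (n+1)) 1,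
      if_pos (Finset.mem_range.mpr (by omega))]
  have e1 : ∑ j ∈ Finset.range (n+1),
      MvPowerSeries.coeff (ee 1 j) F *
        MvPowerSeries.coeff (ee (1-1) (n-j)) (buchDen Bser)
      = -(MvPowerSeries.coeff (ee 1 (n-1)) F) := by
    have hc : ∀ j ∈ Finset.range (n+1),
        MvPowerSeries.coeff (ee 1 j) F *
          MvPowerSeries.coeff (ee (1-1) (n-j)) (buchDen Bser)
        = if j = n-1 then -(MvPowerSeries.coeff (ee 1 (n-1)) F) else 0 := by
      intro j hj
      rw [Finset.mem_range] at hj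
      rw [cD, if_neg (show ¬(1:ℕ)-1 = 1 by omega)]
      by_cases hj1 : j = n-1
      · rw [if_pos hj1, if_pos (show n-j = 1 by omega), hj1,
          show bb (1-1) = 1 from bb_zero]
        ring
      · rw [if_neg hj1, if_neg (show ¬(n-j = 1) by omega)]
        ring
    rw [Finset.sum_congr rfl hc, Finset.sum_ite_eq' (Finset.range (n+1)) (n-1),
      if_pos (Finset.mem_range.mpr (by omega))]
  rw [e0, e1, cN, if_neg (show ¬(1:ℕ) = 2 by omega)] at h
  by_cases hn2 : n = 2
  · rw [if_pos hn2, show aa 1 = Acoef 1 by rw [aa, if_neg one_ne_zero]] at h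
    rw [if_pos hn2]
    linear_combination h
  · rw [if_neg hn2] at h
    rw [if_neg hn2]
    linear_combination h

lemma c10 (hF : F * buchDen Bser = buchNum Aser) :
    MvPowerSeries.coeff (ee 1 0) F = 1 := by
  have h := row1 F hF 1 (le_refl 1)
  rw [if_neg (by omega : ¬(1:ℕ) = 2), show (1:ℕ)-1 = 0 by omega, show bb 0 = 1 from bb_zero] at h
  linear_combination -h

lemma c11 (hF : F * buchDen Bser = buchNum Aser) :
    MvPowerSeries.coeff (ee 1 1) F = Acoef 1 := by
  have h := row1 F hF 2 (by omega)
  rw [if_pos rfl, show (2:ℕ)-1 = 1 by omega, bb_one] at h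
  linear_combination -h

lemma c1B (hF : F * buchDen Bser = buchNum Aser) (k : ℕ) (hk : 2 ≤ k) :
    MvPowerSeries.coeff (ee 1 k) F = Bcoef k := by
  have h := row1 F hF (k+1) (by omega)
  rw [if_neg (by omega : ¬(k+1 = 2)), Nat.add_sub_cancel,
    show bb k = Bcoef k by rw [bb, if_neg (by omega)]] at h
  linear_combination -h

lemma rowA (hF : F * buchDen Bser = buchNum Aser) (n : ℕ) (hn : 3 ≤ n) :
    Acoef n = (∑ j ∈ Finset.range (n+1),
        MvPowerSeries.coeff (ee 1 j) F * bb (n-j))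
      - MvPowerSeries.coeff (ee 2 (n-1)) F := by
  have h := congrArg (MvPowerSeries.coeff (ee 2 n)) hF
  rw [coeff_mul_ee, Finset.sum_range_succ,
    show Finset.range 2 = Finset.range (1+1) from rfl,
    Finset.sum_range_succ, Finset.sum_range_one] at h
  have e0 : ∑ j ∈ Finset.range (n+1),
      MvPowerSeries.coeff (ee 0 j) F *
        MvPowerSeries.coeff (ee (2-0) (n-j)) (buchDen Bser) = 0 := by
    refine Finset.sum_eq_zero fun j hj => ?_
    rw [Finset.mem_range] at hj
    rw [row0 F hF j, cD, if_neg (show ¬(2:ℕ)-0 = 1 by omega)]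
    by_cases hj1 : j = 1
    · rw [if_pos hj1, if_neg (show ¬(n-j = 1) by omega), one_mul]
      ring
    · rw [if_neg hj1, zero_mul]
  have e1 : ∑ j ∈ Finset.range (n+1),
      MvPowerSeries.coeff (ee 1 j) F *
        MvPowerSeries.coeff (ee (2-1) (n-j)) (buchDen Bser)
      = ∑ j ∈ Finset.range (n+1),
        MvPowerSeries.coeff (ee 1 j) F * bb (n-j) := by
    refine Finset.sum_congr rfl fun j hj => ?_
    rw [cD, if_pos (show (2:ℕ)-1 = 1 by omega), show bb (2-1) = 0 from bb_one,
      ite_self, sub_zero]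
  have e2 : ∑ j ∈ Finset.range (n+1),
      MvPowerSeries.coeff (ee 2 j) F *
        MvPowerSeries.coeff (ee (2-2) (n-j)) (buchDen Bser)
      = -(MvPowerSeries.coeff (ee 2 (n-1)) F) := by
    have hc : ∀ j ∈ Finset.range (n+1),
        MvPowerSeries.coeff (ee 2 j) F *
          MvPowerSeries.coeff (ee (2-2) (n-j)) (buchDen Bser)
        = if j = n-1 then -(MvPowerSeries.coeff (ee 2 (n-1)) F) else 0 := by
      intro j hj
      rw [Finset.mem_range] at hj
      rw [cD, if_neg (show ¬(2:ℕ)-2 = 1 by omega)]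
      by_cases hj1 : j = n-1
      · rw [if_pos hj1, if_pos (show n-j = 1 by omega), hj1,
          show bb (2-2) = 1 from bb_zero]
        ring
      · rw [if_neg hj1, if_neg (show ¬(n-j = 1) by omega)]
        ring
    rw [Finset.sum_congr rfl hc, Finset.sum_ite_eq' (Finset.range (n+1)) (n-1),
      if_pos (Finset.mem_range.mpr (by omega))]
  rw [e0, e1, e2, cN, if_pos (show (2:ℕ) = 2 from rfl), if_neg (show ¬(n = 2) by omega),
    show aa n = Acoef n by rw [aa, if_neg (by omega)]] at h
  linear_combination -h

end BuchRows

section BuchGen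

variable (F : MvPowerSeries (Fin 2) R0)

/-- The set of (interior) coefficients of `F`, inside `R0`. -/
def S0 : Set R0 :=
  {x : R0 | ∃ i j : ℕ, 1 ≤ i ∧ 1 ≤ j ∧ x = MvPowerSeries.coeff (ee i j) F}

lemma mem_c (i j : ℕ) (hi : 1 ≤ i) (hj : 1 ≤ j) :
    MvPowerSeries.coeff (ee i j) F ∈ Subring.closure (S0 F) :=
  Subring.subset_closure ⟨i, j, hi, hj, rfl⟩

lemma mem_bb (hF : F * buchDen Bser = buchNum Aser) (k : ℕ) :
    bb k ∈ Subring.closure (S0 F) := by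
  rcases Nat.lt_or_ge k 2 with hk | hk
  · interval_cases k
    · rw [bb_zero]; exact one_mem _
    · rw [bb_one]; exact zero_mem _
  · rw [show bb k = Bcoef k by rw [bb, if_neg (by omega)], ← c1B F hF k hk]
    exact mem_c F 1 k le_rfl (by omega)

lemma mem_B (hF : F * buchDen Bser = buchNum Aser) (k : ℕ) :
    Bcoef k ∈ Subring.closure (S0 F) := by
  rcases Nat.lt_or_ge k 2 with hk | hk
  · rw [Bcoef, dif_neg (by omega)]; exact zero_mem _
  · rw [← c1B F hF k hk]; exact mem_c F 1 k le_rfl (by omega)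

lemma mem_A (hF : F * buchDen Bser = buchNum Aser) (k : ℕ) :
    Acoef k ∈ Subring.closure (S0 F) := by
  rcases Nat.lt_or_ge k 3 with hk | hk
  · interval_cases k
    · rw [Acoef, dif_neg (by omega)]; exact zero_mem _
    · rw [← c11 F hF]; exact mem_c F 1 1 le_rfl le_rfl
    · rw [Acoef, dif_neg (by omega)]; exact zero_mem _
  · rw [rowA F hF k hk]
    refine sub_mem (sum_mem fun j hj => ?_) (mem_c F 2 (k-1) (by omega) (by omega))
    refine mul_mem ?_ (mem_bb F hF (k-j))
    rcases Nat.eq_zero_or_pos j with hj0 | hj0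
    · rw [hj0, c10 F hF]; exact one_mem _
    · exact mem_c F 1 j le_rfl hj0

lemma closure_S0_top (hF : F * buchDen Bser = buchNum Aser) :
    Subring.closure (S0 F) = ⊤ := by
  have hX : Subring.closure (Set.range (MvPolynomial.X : BVar → R0)) = ⊤ := by
    have h := MvPolynomial.adjoin_range_X (R := ℤ) (σ := BVar)
    erw [Algebra.adjoin_int] at h
    rw [eq_top_iff]
    intro x _
    have hx : x ∈ subalgebraOfSubring
        (Subring.closure (Set.range (MvPolynomial.X : BVar → R0))) := by
      rw [h]; exact Algebra.mem_top
    exact mem_subalgebraOfSubring.mp hx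
  rw [eq_top_iff, ← hX]
  refine Subring.closure_le.mpr ?_
  rintro x ⟨v, rfl⟩
  rcases v with ⟨k, hk⟩ | ⟨k, hk⟩
  · have : MvPolynomial.X (Sum.inl ⟨k, hk⟩) = Acoef k := by
      rw [Acoef, dif_pos hk]
    rw [this]
    exact mem_A F hF k
  · have : MvPolynomial.X (Sum.inr ⟨k, hk⟩) = Bcoef k := by
      rw [Bcoef, dif_pos hk]
    rw [this]
    exact mem_B F hF k

end BuchGen

/-- The Buchstaber formal group is a generating formal group over `R_B`: the subring of
`R_B` generated by the coefficients `a_{i,j}` (`i, j ≥ 1`) is all of `R_B`. -/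
theorem statement2 (F : MvPowerSeries (Fin 2) R0) (hF : F * buchDen Bser = buchNum Aser) :
    Subring.closure {x : RB F | ∃ i j : ℕ, 1 ≤ i ∧ 1 ≤ j ∧ x = aB F i j} = ⊤ := by
  rw [eq_top_iff]
  rintro x' -
  obtain ⟨x, rfl⟩ := Ideal.Quotient.mk_surjective (I := Iass F) x'
  have hx : x ∈ Subring.closure (S0 F) := by
    rw [closure_S0_top F hF]; trivial
  have hmem : Ideal.Quotient.mk (Iass F) x ∈
      (Subring.closure (S0 F)).map (Ideal.Quotient.mk (Iass F)) := ⟨x, hx, rfl⟩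
  rw [RingHom.map_closure] at hmem
  refine Subring.closure_mono ?_ hmem
  rintro y ⟨z, ⟨i, j, hi, hj, rfl⟩, rfl⟩
  exact ⟨i, j, hi, hj, rfl⟩

end
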